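/- Let R be a Noetherian local ring, f_1, f_2, f ∈ m, J = (f_1, f_2), I = (f_1, f_2, f). Fix L ≥ 2. Suppose (0 : f_1) ∩ I^{d-1} = 0 for all 1 ≤ d ≤ L and (f_1 : f_2) ⊆ (f_1 : f). Then the following are equivalent: (a) ((f_1·I^{d-1} : f_2) ∩ I^{d-1}) / (f_1·I^{d-2}) = 0 for all 2 ≤ d ≤ L; (b) E(I)_d ≅ (J·I^{d-1} : f^d)/(J·I^{d-2} : f^{d-1}) for all 2 ≤ d ≤ L (with the isomorphism induced by the natural surjection to the right-hand side). -/

import Mathlib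

open Ideal Submodule

variable {R : Type*} [CommRing R]

/-- The linear map `(a₁,…,aₘ) ↦ Σ aⱼ zⱼ`. -/
noncomputable def sumMul {m : ℕ} (z : Fin m → R) : (Fin m → R) →ₗ[R] R :=
  ∑ j, (LinearMap.proj j : (Fin m → R) →ₗ[R] R).smulRight (z j)

/-- The degree-`d` cycles of the Koszul complex of the degree-one elements
`z₁t,…,zₘt` on the Rees algebra of `I`. -/
noncomputable def kosZ1 {m : ℕ} (I : Ideal R) (z : Fin m → R) (d : ℕ) :
    Submodule R (Fin m → R) :=
  (⨅ j : Fin m, Submodule.comap (LinearMap.proj j) ((I ^ (d - 1) : Ideal R) : Submodule R R))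
    ⊓ LinearMap.ker (sumMul z)

/-- The degree-`d` boundaries of the Koszul complex of `z₁t,…,zₘt` on the Rees algebra
of `I`. -/
noncomputable def kosB1 {m : ℕ} (I : Ideal R) (z : Fin m → R) (d : ℕ) :
    Submodule R (Fin m → R) :=
  Submodule.span R {v | ∃ j l : Fin m, ∃ u ∈ I ^ (d - 2),
    v = Pi.single l (z j * u) - Pi.single j (z l * u)}

/-- The degree-`d` component of the first Koszul homology `H₁(z₁t,…,zₘt; R(I))`;
for the full sequence of generators of `I` this computes the `d`-th module of effective
relations `E(I)_d`. -/
noncomputable abbrev kosH1 {m : ℕ} (I : Ideal R) (z : Fin m → R) (d : ℕ) :=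
  ↥(kosZ1 I z d) ⧸ (Submodule.comap (kosZ1 I z d).subtype (kosB1 I z d))

/-- The quotient `A/B` of an ideal `A` by another ideal `B` (as `R`-modules). -/
noncomputable abbrev idealQuot {R : Type*} [CommRing R] (A B : Ideal R) :=
  ↥A ⧸ (Submodule.comap (Submodule.subtype (A : Submodule R R)) (B : Submodule R R))

lemma sumMul_apply {m : ℕ} (z v : Fin m → R) : sumMul z v = ∑ j, v j * z j := by
  simp [sumMul, smul_eq_mul]

lemma mem_kosZ1_iff (f1 f2 f : R) (I : Ideal R) (k : ℕ) (v : Fin 3 → R) :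
    v ∈ kosZ1 I ![f1, f2, f] (k + 2) ↔
      (v 0 ∈ I ^ (k + 1) ∧ v 1 ∈ I ^ (k + 1) ∧ v 2 ∈ I ^ (k + 1)) ∧
        v 0 * f1 + v 1 * f2 + v 2 * f = 0 := by
  simp [kosZ1, Submodule.mem_iInf, sumMul_apply, Fin.sum_univ_three, Fin.forall_fin_succ,
    and_assoc]

noncomputable def Wsub (f1 f2 f : R) (I : Ideal R) (k : ℕ) : Submodule R (Fin 3 → R) :=
  Submodule.comap (LinearMap.proj 1) ((I ^ (k + 1) : Ideal R) : Submodule R R) ⊓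
    Submodule.comap (LinearMap.proj 2) ((I ^ (k + 1) : Ideal R) : Submodule R R) ⊓
    LinearMap.ker (sumMul ![f ^ (k + 2), -f1, -f2])

lemma mem_Wsub_iff (f1 f2 f : R) (I : Ideal R) (k : ℕ) (v : Fin 3 → R) :
    v ∈ Wsub f1 f2 f I k ↔
      v 1 ∈ I ^ (k + 1) ∧ v 2 ∈ I ^ (k + 1) ∧
        v 0 * f ^ (k + 2) = v 1 * f1 + v 2 * f2 := by
  simp only [Wsub, Submodule.mem_inf, Submodule.mem_comap, LinearMap.mem_ker, sumMul_apply,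
    Fin.sum_univ_three, Matrix.cons_val_zero, Matrix.cons_val_one, Matrix.head_cons,
    Matrix.cons_val_two, Matrix.tail_cons, LinearMap.proj_apply, and_assoc]
  constructor
  · rintro ⟨h1, h2, h3⟩; exact ⟨h1, h2, by linear_combination h3⟩
  · rintro ⟨h1, h2, h3⟩; exact ⟨h1, h2, by linear_combination h3⟩

noncomputable def Lmap (f1 f2 f : R) (k : ℕ) : (Fin 3 → R) →ₗ[R] (Fin 3 → R) :=
  LinearMap.pi ![-(LinearMap.proj 1), -(LinearMap.proj 2),
    (LinearMap.proj 0 : (Fin 3 → R) →ₗ[R] R).smulRight (f ^ (k + 1))]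

lemma Lmap_apply (f1 f2 f : R) (k : ℕ) (v : Fin 3 → R) :
    Lmap f1 f2 f k v = ![-(v 1), -(v 2), v 0 * f ^ (k + 1)] := by
  funext i
  fin_cases i <;> simp [Lmap, smul_eq_mul]

noncomputable def Phimap (f1 f2 f : R) : (Fin 3 → R) →ₗ[R] (Fin 3 → R) :=
  LinearMap.pi ![-(f2 • LinearMap.proj 0 + f • LinearMap.proj 1),
    f1 • LinearMap.proj 0 - f • LinearMap.proj 2,
    f1 • LinearMap.proj 1 + f2 • LinearMap.proj 2]

lemma Phimap_apply (f1 f2 f : R) (v : Fin 3 → R) :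
    Phimap f1 f2 f v = ![-(f2 * v 0 + f * v 1), f1 * v 0 - f * v 2, f1 * v 1 + f2 * v 2] := by
  funext i
  fin_cases i <;> simp [Phimap, smul_eq_mul]

noncomputable def Tsub (I : Ideal R) (k : ℕ) : Submodule R (Fin 3 → R) :=
  ⨅ j : Fin 3, Submodule.comap (LinearMap.proj j) ((I ^ k : Ideal R) : Submodule R R)

lemma mem_Tsub_iff (I : Ideal R) (k : ℕ) (v : Fin 3 → R) :
    v ∈ Tsub I k ↔ v 0 ∈ I ^ k ∧ v 1 ∈ I ^ k ∧ v 2 ∈ I ^ k := by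
  simp [Tsub, Submodule.mem_iInf, Fin.forall_fin_succ]


lemma vecmemT (I : Ideal R) (k : ℕ) {a b c : R} (ha : a ∈ I ^ k) (hb : b ∈ I ^ k)
    (hc : c ∈ I ^ k) : ![a, b, c] ∈ Tsub I k :=
  (mem_Tsub_iff I k _).2 ⟨by simpa using ha, by simpa using hb, by simpa using hc⟩

lemma kosB1_eq (f1 f2 f : R) (I : Ideal R) (k : ℕ) :
    kosB1 I ![f1, f2, f] (k + 2) = (Tsub I k).map (Phimap f1 f2 f) := by
  apply le_antisymm
  · rw [kosB1, Submodule.span_le]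
    rintro v ⟨j, l, u, hu, rfl⟩
    have hu' : u ∈ I ^ k := hu
    have h0 : (0 : R) ∈ I ^ k := zero_mem _
    have hn : -u ∈ I ^ k := neg_mem hu'
    fin_cases j <;> fin_cases l
    · exact ⟨0, Submodule.zero_mem _, by simp⟩
    · exact ⟨_, vecmemT I k hu' h0 h0,
        by funext i; fin_cases i <;> simp [Phimap_apply, Pi.single] <;> ring⟩
    · exact ⟨_, vecmemT I k h0 hu' h0,
        by funext i; fin_cases i <;> simp [Phimap_apply, Pi.single] <;> ring⟩
    · exact ⟨_, vecmemT I k hn h0 h0,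
        by funext i; fin_cases i <;> simp [Phimap_apply, Pi.single] <;> ring⟩
    · exact ⟨0, Submodule.zero_mem _, by simp⟩
    · exact ⟨_, vecmemT I k h0 h0 hu',
        by funext i; fin_cases i <;> simp [Phimap_apply, Pi.single] <;> ring⟩
    · exact ⟨_, vecmemT I k h0 hn h0,
        by funext i; fin_cases i <;> simp [Phimap_apply, Pi.single] <;> ring⟩
    · exact ⟨_, vecmemT I k h0 h0 hn,
        by funext i; fin_cases i <;> simp [Phimap_apply, Pi.single] <;> ring⟩
    · exact ⟨0, Submodule.zero_mem _, by simp⟩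
  · rintro v ⟨t, ht, rfl⟩
    obtain ⟨ht0, ht1, ht2⟩ := (mem_Tsub_iff I k t).1 ht
    have heq : Phimap f1 f2 f t =
        (Pi.single (1 : Fin 3) (f1 * t 0) - Pi.single (0 : Fin 3) (f2 * t 0)) +
        (Pi.single (2 : Fin 3) (f1 * t 1) - Pi.single (0 : Fin 3) (f * t 1)) +
        (Pi.single (2 : Fin 3) (f2 * t 2) - Pi.single (1 : Fin 3) (f * t 2)) := by
      funext i; fin_cases i <;> simp [Phimap_apply, Pi.single] <;> ring
    rw [heq]
    refine add_mem (add_mem ?_ ?_) ?_ <;> apply Submodule.subset_span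
    · exact ⟨0, 1, t 0, ht0, by simp⟩
    · exact ⟨0, 2, t 1, ht1, by simp⟩
    · exact ⟨1, 2, t 2, ht2, by simp⟩
section
variable (f1 f2 f : R) (J I : Ideal R)

lemma memJ1 (hJ : J = Ideal.span {f1, f2}) : f1 ∈ J := hJ ▸ Ideal.subset_span (by simp)
lemma memJ2 (hJ : J = Ideal.span {f1, f2}) : f2 ∈ J := hJ ▸ Ideal.subset_span (by simp)
lemma memI1 (hI : I = Ideal.span {f1, f2, f}) : f1 ∈ I := hI ▸ Ideal.subset_span (by simp)
lemma memI2 (hI : I = Ideal.span {f1, f2, f}) : f2 ∈ I := hI ▸ Ideal.subset_span (by simp)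
lemma memIf (hI : I = Ideal.span {f1, f2, f}) : f ∈ I := hI ▸ Ideal.subset_span (by simp)

lemma JI_mem (hJ : J = Ideal.span {f1, f2}) (n : ℕ) {u1 u2 : R} (h1 : u1 ∈ I ^ n)
    (h2 : u2 ∈ I ^ n) : f1 * u1 + f2 * u2 ∈ J * I ^ n :=
  add_mem (Ideal.mul_mem_mul (memJ1 f1 f2 J hJ) h1) (Ideal.mul_mem_mul (memJ2 f1 f2 J hJ) h2)

lemma JI_eq (hJ : J = Ideal.span {f1, f2}) (n : ℕ) :
    J * I ^ n = Ideal.span {f1} * I ^ n ⊔ Ideal.span {f2} * I ^ n := by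
  rw [hJ, show ({f1, f2} : Set R) = insert f1 {f2} from rfl, Ideal.span_insert, Ideal.sup_mul]

lemma JI_decomp (hJ : J = Ideal.span {f1, f2}) (n : ℕ) {x : R} (hx : x ∈ J * I ^ n) :
    ∃ u1 ∈ I ^ n, ∃ u2 ∈ I ^ n, x = f1 * u1 + f2 * u2 := by
  rw [JI_eq f1 f2 J I hJ] at hx
  obtain ⟨a, ha, b, hb, rfl⟩ := Submodule.mem_sup.1 hx
  obtain ⟨u1, hu1, rfl⟩ := Ideal.mem_span_singleton_mul.1 ha
  obtain ⟨u2, hu2, rfl⟩ := Ideal.mem_span_singleton_mul.1 hb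
  exact ⟨u1, hu1, u2, hu2, rfl⟩

lemma I_eq_J_sup (hJ : J = Ideal.span {f1, f2}) (hI : I = Ideal.span {f1, f2, f}) :
    I = J ⊔ Ideal.span {f} := by
  rw [hI, hJ, show ({f1, f2, f} : Set R) = insert f1 (insert f2 {f}) from rfl,
    show ({f1, f2} : Set R) = insert f1 {f2} from rfl, Ideal.span_insert, Ideal.span_insert,
    Ideal.span_insert, sup_assoc]

lemma pow_succ_le (hJ : J = Ideal.span {f1, f2}) (hI : I = Ideal.span {f1, f2, f}) :
    ∀ n : ℕ, I ^ (n + 1) ≤ J * I ^ n ⊔ Ideal.span {f ^ (n + 1)} := by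
  have hIJf := I_eq_J_sup f1 f2 f J I hJ hI
  intro n
  induction n with
  | zero => rw [pow_one, pow_one, pow_zero, mul_one, hIJf]
  | succ n ih =>
    have h1 : I ^ (n + 2) = I ^ (n + 1) * I := pow_succ I (n + 1)
    rw [h1]
    calc I ^ (n + 1) * I ≤ (J * I ^ n ⊔ Ideal.span {f ^ (n + 1)}) * I :=
          Ideal.mul_mono ih le_rfl
      _ = J * I ^ n * I ⊔ Ideal.span {f ^ (n + 1)} * I := Ideal.sup_mul _ _ _
      _ ≤ J * I ^ (n + 1) ⊔ Ideal.span {f ^ (n + 2)} := by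
          apply sup_le
          · rw [mul_assoc, ← pow_succ]
            exact le_sup_left
          · calc Ideal.span {f ^ (n + 1)} * I
                = Ideal.span {f ^ (n + 1)} * J ⊔ Ideal.span {f ^ (n + 1)} * Ideal.span {f} := by
                  rw [hIJf, Ideal.mul_sup]
              _ ≤ J * I ^ (n + 1) ⊔ Ideal.span {f ^ (n + 2)} := by
                  apply sup_le
                  · refine le_sup_of_le_left ?_
                    rw [mul_comm]
                    exact Ideal.mul_mono le_rfl ((Ideal.span_singleton_le_iff_mem _).2
                      (Ideal.pow_mem_pow (memIf f1 f2 f I hI) _))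
                  · rw [Ideal.span_singleton_mul_span_singleton, ← pow_succ]
                    exact le_sup_right

lemma mem_pow_decomp (hJ : J = Ideal.span {f1, f2}) (hI : I = Ideal.span {f1, f2, f}) (k : ℕ)
    {x : R} (hx : x ∈ I ^ (k + 1)) :
    ∃ u1 ∈ I ^ k, ∃ u2 ∈ I ^ k, ∃ c : R, x = f1 * u1 + f2 * u2 + c * f ^ (k + 1) := by
  have := pow_succ_le f1 f2 f J I hJ hI k hx
  obtain ⟨a, ha, b, hb, rfl⟩ := Submodule.mem_sup.1 this
  obtain ⟨u1, hu1, u2, hu2, rfl⟩ := JI_decomp f1 f2 J I hJ k ha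
  obtain ⟨c, rfl⟩ := Ideal.mem_span_singleton'.1 hb
  exact ⟨u1, hu1, u2, hu2, c, rfl⟩

end

section Core
variable (f1 f2 f : R) (J I : Ideal R) (k : ℕ)

lemma Lmap_mem_Z (hI : I = Ideal.span {f1, f2, f}) :
    ∀ v ∈ Wsub f1 f2 f I k, Lmap f1 f2 f k v ∈ kosZ1 I ![f1, f2, f] (k + 2) := by
  intro v hv
  obtain ⟨h1, h2, heq⟩ := (mem_Wsub_iff f1 f2 f I k v).1 hv
  rw [Lmap_apply, mem_kosZ1_iff]
  refine ⟨⟨?_, ?_, ?_⟩, ?_⟩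
  · simpa using neg_mem h1
  · simpa using neg_mem h2
  · simpa using Ideal.mul_mem_left _ (v 0) (Ideal.pow_mem_pow (memIf f1 f2 f I hI) (k + 1))
  · simp only [Matrix.cons_val_zero, Matrix.cons_val_one, Matrix.head_cons,
      Matrix.cons_val_two, Matrix.tail_cons]
    linear_combination heq

lemma proj0_mem_A (hJ : J = Ideal.span {f1, f2}) :
    ∀ v ∈ Wsub f1 f2 f I k,
      v 0 ∈ Submodule.colon (J * I ^ (k + 1)) (Ideal.span {f ^ (k + 2)}) := by
  intro v hv
  obtain ⟨h1, h2, heq⟩ := (mem_Wsub_iff f1 f2 f I k v).1 hv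
  rw [Ideal.mem_colon_span_singleton, heq, mul_comm (v 1) f1, mul_comm (v 2) f2]
  exact JI_mem f1 f2 J I hJ (k + 1) h1 h2

lemma p_surj_core (hJ : J = Ideal.span {f1, f2}) :
    ∀ c ∈ Submodule.colon (J * I ^ (k + 1)) (Ideal.span {f ^ (k + 2)}),
      ∃ w ∈ Wsub f1 f2 f I k, w 0 = c := by
  intro c hc
  rw [Ideal.mem_colon_span_singleton] at hc
  obtain ⟨a1, ha1, a2, ha2, hdec⟩ := JI_decomp f1 f2 J I hJ (k + 1) hc
  refine ⟨![c, a1, a2], ?_, by simp⟩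
  rw [mem_Wsub_iff]
  refine ⟨by simpa using ha1, by simpa using ha2, ?_⟩
  simp only [Matrix.cons_val_zero, Matrix.cons_val_one, Matrix.head_cons,
    Matrix.cons_val_two, Matrix.tail_cons]
  linear_combination hdec

lemma ker_qp_core (hJ : J = Ideal.span {f1, f2}) :
    ∀ v ∈ Wsub f1 f2 f I k, Lmap f1 f2 f k v ∈ kosB1 I ![f1, f2, f] (k + 2) →
      v 0 * f ^ (k + 1) ∈ J * I ^ k := by
  intro v _ hB
  rw [kosB1_eq] at hB
  obtain ⟨t, ht, hPhi⟩ := hB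
  obtain ⟨_, ht1, ht2⟩ := (mem_Tsub_iff I k t).1 ht
  have h2 := congrFun hPhi 2
  rw [Phimap_apply, Lmap_apply] at h2
  simp only [Matrix.cons_val_two, Matrix.tail_cons, Matrix.head_cons] at h2
  rw [← h2]
  exact JI_mem f1 f2 J I hJ k ht1 ht2

lemma q_surj_core (hJ : J = Ideal.span {f1, f2}) (hI : I = Ideal.span {f1, f2, f}) :
    ∀ v ∈ kosZ1 I ![f1, f2, f] (k + 2), ∃ w ∈ Wsub f1 f2 f I k,
      Lmap f1 f2 f k w - v ∈ kosB1 I ![f1, f2, f] (k + 2) := by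
  intro v hv
  obtain ⟨a0, a1, a2, rfl⟩ : ∃ a0 a1 a2, v = ![a0, a1, a2] :=
    ⟨v 0, v 1, v 2, by funext i; fin_cases i <;> rfl⟩
  obtain ⟨⟨hv0, hv1, hv2⟩, hveq⟩ := (mem_kosZ1_iff f1 f2 f I k _).1 hv
  simp only [Matrix.cons_val_zero, Matrix.cons_val_one, Matrix.head_cons, Matrix.cons_val_two,
    Matrix.tail_cons] at hv0 hv1 hv2 hveq
  obtain ⟨u1, hu1, u2, hu2, c, hdec⟩ := mem_pow_decomp f1 f2 f J I hJ hI k hv2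
  have hfu1 : f * u1 ∈ I ^ (k + 1) := by
    rw [pow_succ']
    exact Ideal.mul_mem_mul (memIf f1 f2 f I hI) hu1
  have hfu2 : f * u2 ∈ I ^ (k + 1) := by
    rw [pow_succ']
    exact Ideal.mul_mem_mul (memIf f1 f2 f I hI) hu2
  refine ⟨![c, -(a0 + f * u1), -(a1 + f * u2)], ?_, ?_⟩
  · rw [mem_Wsub_iff]
    refine ⟨by simpa using neg_mem (add_mem hv0 hfu1),
      by simpa using neg_mem (add_mem hv1 hfu2), ?_⟩
    simp only [Matrix.cons_val_zero, Matrix.cons_val_one, Matrix.head_cons,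
      Matrix.cons_val_two, Matrix.tail_cons]
    linear_combination hveq - f * hdec
  · rw [kosB1_eq]
    refine ⟨![0, -u1, -u2], vecmemT I k (zero_mem _) (neg_mem hu1) (neg_mem hu2), ?_⟩
    rw [Phimap_apply, Lmap_apply]
    funext i
    fin_cases i
    · simp
    · simp
    · simp
      linear_combination hdec

lemma ker_pq_core (hJ : J = Ideal.span {f1, f2}) (hI : I = Ideal.span {f1, f2, f})
    (hann : Submodule.colon (⊥ : Ideal R) (Ideal.span {f1}) ⊓ I ^ (k + 1) = ⊥)
    (ha : Submodule.colon (Ideal.span {f1} * I ^ (k + 1)) (Ideal.span {f2}) ⊓ I ^ (k + 1) ≤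
      Ideal.span {f1} * I ^ k) :
    ∀ v ∈ Wsub f1 f2 f I k, v 0 * f ^ (k + 1) ∈ J * I ^ k →
      Lmap f1 f2 f k v ∈ kosB1 I ![f1, f2, f] (k + 2) := by
  intro v hv h0
  obtain ⟨hw1, hw2, heq⟩ := (mem_Wsub_iff f1 f2 f I k v).1 hv
  obtain ⟨u1, hu1, u2, hu2, hdec⟩ := JI_decomp f1 f2 J I hJ k h0
  have hfu1 : f * u1 ∈ I ^ (k + 1) := by
    rw [pow_succ']; exact Ideal.mul_mem_mul (memIf f1 f2 f I hI) hu1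
  have hfu2 : f * u2 ∈ I ^ (k + 1) := by
    rw [pow_succ']; exact Ideal.mul_mem_mul (memIf f1 f2 f I hI) hu2
  set A1 : R := -(v 1) + f * u1 with hA1
  set A2 : R := -(v 2) + f * u2 with hA2
  have hsum : A1 * f1 + A2 * f2 = 0 := by
    rw [hA1, hA2]
    linear_combination heq - f * hdec
  have hA1m : A1 ∈ I ^ (k + 1) := add_mem (neg_mem hw1) hfu1
  have hA2m : A2 ∈ I ^ (k + 1) := add_mem (neg_mem hw2) hfu2
  have hA2c : A2 ∈ Submodule.colon (Ideal.span {f1} * I ^ (k + 1)) (Ideal.span {f2}) := by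
    rw [Ideal.mem_colon_span_singleton]
    have : A2 * f2 = f1 * (-A1) := by linear_combination hsum
    rw [this]
    exact Ideal.mul_mem_mul (Ideal.mem_span_singleton_self f1) (neg_mem hA1m)
  obtain ⟨u, hu, huA2⟩ := Ideal.mem_span_singleton_mul.1 (ha ⟨hA2c, hA2m⟩)
  have hg : A1 + f2 * u = 0 := by
    have hz : (A1 + f2 * u) * f1 = 0 := by
      linear_combination hsum + f2 * huA2
    have hmem : A1 + f2 * u ∈ Submodule.colon (⊥ : Ideal R) (Ideal.span {f1}) ⊓ I ^ (k + 1) :=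
      Submodule.mem_inf.mpr
        ⟨Ideal.mem_colon_span_singleton.mpr (by rw [hz]; exact Submodule.zero_mem _),
          add_mem hA1m (by rw [pow_succ']; exact Ideal.mul_mem_mul (memI2 f1 f2 f I hI) hu)⟩
    rw [hann] at hmem
    simpa using hmem
  rw [kosB1_eq]
  refine ⟨![u, u1, u2], vecmemT I k hu hu1 hu2, ?_⟩
  rw [Phimap_apply, Lmap_apply]
  funext i
  fin_cases i
  · show -(f2 * u + f * u1) = -(v 1)
    linear_combination hA1 - hg
  · show f1 * u - f * u2 = -(v 2)
    linear_combination huA2 + hA2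
  · show f1 * u1 + f2 * u2 = v 0 * f ^ (k + 1)
    linear_combination -hdec

end Core

section Maps
variable (f1 f2 f : R) (J I : Ideal R) (k : ℕ)

noncomputable def qdef (hI : I = Ideal.span {f1, f2, f}) :
    ↥(Wsub f1 f2 f I k) →ₗ[R] kosH1 I ![f1, f2, f] (k + 2) :=
  (Submodule.comap (kosZ1 I ![f1, f2, f] (k + 2)).subtype
      (kosB1 I ![f1, f2, f] (k + 2))).mkQ.comp
    (LinearMap.codRestrict (kosZ1 I ![f1, f2, f] (k + 2))
      ((Lmap f1 f2 f k).domRestrict (Wsub f1 f2 f I k))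
      (fun w => Lmap_mem_Z f1 f2 f I k hI w.1 w.2))

noncomputable def pdef (hJ : J = Ideal.span {f1, f2}) :
    ↥(Wsub f1 f2 f I k) →ₗ[R]
      idealQuot (Submodule.colon (J * I ^ (k + 1)) (Ideal.span {f ^ (k + 2)}))
        (Submodule.colon (J * I ^ k) (Ideal.span {f ^ (k + 1)})) :=
  (Submodule.comap
      (Submodule.subtype (Submodule.colon (J * I ^ (k + 1)) (Ideal.span {f ^ (k + 2)})))
      (Submodule.colon (J * I ^ k) (Ideal.span {f ^ (k + 1)}))).mkQ.comp
    (LinearMap.codRestrict _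
      ((LinearMap.proj 0).domRestrict (Wsub f1 f2 f I k))
      (fun w => proj0_mem_A f1 f2 f J I k hJ w.1 w.2))

lemma qdef_zero_iff (hI : I = Ideal.span {f1, f2, f}) (w : ↥(Wsub f1 f2 f I k)) :
    qdef f1 f2 f I k hI w = 0 ↔
      Lmap f1 f2 f k (w : Fin 3 → R) ∈ kosB1 I ![f1, f2, f] (k + 2) := by
  simp [qdef, Submodule.Quotient.mk_eq_zero, Submodule.mem_comap]
  exact Iff.rfl

lemma pdef_zero_iff (hJ : J = Ideal.span {f1, f2}) (w : ↥(Wsub f1 f2 f I k)) :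
    pdef f1 f2 f J I k hJ w = 0 ↔
      (w : Fin 3 → R) 0 ∈ Submodule.colon (J * I ^ k) (Ideal.span {f ^ (k + 1)}) := by
  simp [pdef, Submodule.Quotient.mk_eq_zero, Submodule.mem_comap]
  exact Iff.rfl

lemma qdef_surj (hJ : J = Ideal.span {f1, f2}) (hI : I = Ideal.span {f1, f2, f}) :
    Function.Surjective (qdef f1 f2 f I k hI) := by
  intro y
  obtain ⟨z, rfl⟩ := Submodule.Quotient.mk_surjective _ y
  obtain ⟨w, hw, hB⟩ := q_surj_core f1 f2 f J I k hJ hI z.1 z.2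
  refine ⟨⟨w, hw⟩, ?_⟩
  show Submodule.Quotient.mk _ = Submodule.Quotient.mk z
  rw [Submodule.Quotient.eq]
  exact hB

lemma pdef_surj (hJ : J = Ideal.span {f1, f2}) :
    Function.Surjective (pdef f1 f2 f J I k hJ) := by
  intro y
  obtain ⟨c, rfl⟩ := Submodule.Quotient.mk_surjective _ y
  obtain ⟨w, hw, hw0⟩ := p_surj_core f1 f2 f J I k hJ c.1 c.2
  refine ⟨⟨w, hw⟩, ?_⟩
  show Submodule.Quotient.mk _ = Submodule.Quotient.mk c
  congr 1
  exact Subtype.ext hw0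

lemma ker_q_le_ker_p (hJ : J = Ideal.span {f1, f2}) (hI : I = Ideal.span {f1, f2, f}) :
    LinearMap.ker (qdef f1 f2 f I k hI) ≤ LinearMap.ker (pdef f1 f2 f J I k hJ) := by
  intro w hw
  rw [LinearMap.mem_ker] at hw ⊢
  rw [qdef_zero_iff] at hw
  rw [pdef_zero_iff, Ideal.mem_colon_span_singleton]
  exact ker_qp_core f1 f2 f J I k hJ w.1 w.2 hw

lemma ker_p_le_ker_q (hJ : J = Ideal.span {f1, f2}) (hI : I = Ideal.span {f1, f2, f})
    (hann : Submodule.colon (⊥ : Ideal R) (Ideal.span {f1}) ⊓ I ^ (k + 1) = ⊥)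
    (ha : Submodule.colon (Ideal.span {f1} * I ^ (k + 1)) (Ideal.span {f2}) ⊓ I ^ (k + 1) ≤
      Ideal.span {f1} * I ^ k) :
    LinearMap.ker (pdef f1 f2 f J I k hJ) ≤ LinearMap.ker (qdef f1 f2 f I k hI) := by
  intro w hw
  rw [LinearMap.mem_ker] at hw ⊢
  rw [pdef_zero_iff, Ideal.mem_colon_span_singleton] at hw
  rw [qdef_zero_iff]
  exact ker_pq_core f1 f2 f J I k hJ hI hann ha w.1 w.2 hw

lemma main_forward (hJ : J = Ideal.span {f1, f2}) (hI : I = Ideal.span {f1, f2, f})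
    (hann : Submodule.colon (⊥ : Ideal R) (Ideal.span {f1}) ⊓ I ^ (k + 1) = ⊥)
    (ha : Submodule.colon (Ideal.span {f1} * I ^ (k + 1)) (Ideal.span {f2}) ⊓ I ^ (k + 1) ≤
      Ideal.span {f1} * I ^ k) :
    Nonempty (kosH1 I ![f1, f2, f] (k + 2) ≃ₗ[R]
      idealQuot (Submodule.colon (J * I ^ (k + 1)) (Ideal.span {f ^ (k + 2)}))
        (Submodule.colon (J * I ^ k) (Ideal.span {f ^ (k + 1)}))) := by
  have hker : LinearMap.ker (qdef f1 f2 f I k hI) = LinearMap.ker (pdef f1 f2 f J I k hJ) :=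
    le_antisymm (ker_q_le_ker_p f1 f2 f J I k hJ hI)
      (ker_p_le_ker_q f1 f2 f J I k hJ hI hann ha)
  exact ⟨(((qdef f1 f2 f I k hI).quotKerEquivOfSurjective
      (qdef_surj f1 f2 f J I k hJ hI)).symm.trans
    (Submodule.quotEquivOfEq _ _ hker)).trans
      ((pdef f1 f2 f J I k hJ).quotKerEquivOfSurjective (pdef_surj f1 f2 f J I k hJ))⟩

lemma main_backward [IsNoetherianRing R] (hJ : J = Ideal.span {f1, f2})
    (hI : I = Ideal.span {f1, f2, f})
    (hiso : Nonempty (kosH1 I ![f1, f2, f] (k + 2) ≃ₗ[R]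
      idealQuot (Submodule.colon (J * I ^ (k + 1)) (Ideal.span {f ^ (k + 2)}))
        (Submodule.colon (J * I ^ k) (Ideal.span {f ^ (k + 1)}))))
    (hfw : ∀ w v : R, w ∈ I ^ k → v ∈ I ^ k → f2 * w + f1 * v = 0 →
      f * w ∈ Ideal.span {f1} * I ^ k) :
    Submodule.colon (Ideal.span {f1} * I ^ (k + 1)) (Ideal.span {f2}) ⊓ I ^ (k + 1) ≤
      Ideal.span {f1} * I ^ k := by
  obtain ⟨θ⟩ := hiso
  set q := qdef f1 f2 f I k hI with hq
  set p := pdef f1 f2 f J I k hJ with hp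
  have hq_surj := qdef_surj f1 f2 f J I k hJ hI
  have hp_surj := pdef_surj f1 f2 f J I k hJ
  have hkerqp := ker_q_le_ker_p f1 f2 f J I k hJ hI
  set e := q.quotKerEquivOfSurjective hq_surj with he
  set π := ((LinearMap.ker q).liftQ p hkerqp).comp e.symm.toLinearMap with hπ
  have hπq : ∀ w : ↥(Wsub f1 f2 f I k), π (e (Submodule.Quotient.mk w)) = p w := by
    intro w
    rw [hπ, LinearMap.comp_apply, LinearEquiv.coe_toLinearMap, LinearEquiv.symm_apply_apply,
      Submodule.liftQ_apply]
  have hπ_surj : Function.Surjective π := by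
    intro y
    obtain ⟨w, hw⟩ := hp_surj y
    exact ⟨e (Submodule.Quotient.mk w), by rw [hπq, hw]⟩
  have hnoe : IsNoetherian R (kosH1 I ![f1, f2, f] (k + 2)) := by
    have h1 : IsNoetherian R (Fin 3 → R) := inferInstance
    have h2 : IsNoetherian R ↥(kosZ1 I ![f1, f2, f] (k + 2)) := isNoetherian_submodule' _
    exact isNoetherian_quotient _
  have hendo : Function.Surjective (θ.symm.toLinearMap.comp π) :=
    θ.symm.surjective.comp hπ_surj
  have hinj : Function.Injective (θ.symm.toLinearMap.comp π) :=
    IsNoetherian.injective_of_surjective_endomorphism _ hendo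
  have hπ_inj : Function.Injective π := by
    intro a b hab
    exact hinj (by simp [LinearMap.comp_apply, hab])
  have hkerpq : LinearMap.ker p ≤ LinearMap.ker q := by
    intro w hw
    rw [LinearMap.mem_ker] at hw
    have h1 : π (e (Submodule.Quotient.mk w)) = 0 := by rw [hπq, hw]
    have h2 : e (Submodule.Quotient.mk w) = 0 := hπ_inj (by rw [h1, map_zero])
    have h3 := e.map_eq_zero_iff.mp h2
    rwa [Submodule.Quotient.mk_eq_zero, LinearMap.mem_ker] at h3
  -- now extract the colon statement
  rintro x ⟨hx1, hx2⟩
  rw [SetLike.mem_coe, Ideal.mem_colon_span_singleton] at hx1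
  obtain ⟨y, hy, hxy⟩ := Ideal.mem_span_singleton_mul.1 hx1
  have hwmem : ![(0 : R), -y, x] ∈ Wsub f1 f2 f I k := by
    rw [mem_Wsub_iff]
    refine ⟨by simpa using neg_mem hy, by simpa using hx2, ?_⟩
    simp only [Matrix.cons_val_zero, Matrix.cons_val_one, Matrix.head_cons,
      Matrix.cons_val_two, Matrix.tail_cons]
    linear_combination hxy
  have hp0 : p ⟨_, hwmem⟩ = 0 := by
    rw [hp, pdef_zero_iff]
    simpa using Submodule.zero_mem _
  have hq0 := hkerpq (LinearMap.mem_ker.2 hp0)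
  rw [LinearMap.mem_ker, hq, qdef_zero_iff, kosB1_eq] at hq0
  obtain ⟨t, ht, hPhi⟩ := hq0
  obtain ⟨ht0, ht1, ht2⟩ := (mem_Tsub_iff I k t).1 ht
  have e1 := congrFun hPhi 1
  have e2 := congrFun hPhi 2
  rw [Phimap_apply, Lmap_apply] at e1 e2
  simp only [Matrix.cons_val_zero, Matrix.cons_val_one, Matrix.head_cons, Matrix.cons_val_two,
    Matrix.tail_cons, zero_mul] at e1 e2
  -- e1 : f1 * t 0 - f * t 2 = -(![0,-y,x] 2) = -x
  -- e2 : f1 * t 1 + f2 * t 2 = ![0,-y,x] 0 * f ^ (k+1) = 0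
  have hft2 : f * t 2 ∈ Ideal.span {f1} * I ^ k := by
    refine hfw (t 2) (t 1) ht2 ht1 ?_
    linear_combination e2
  have hx : x = f * t 2 - f1 * t 0 := by linear_combination e1
  rw [hx]
  exact sub_mem hft2 (Ideal.mul_mem_mul (Ideal.mem_span_singleton_self f1) ht0)

end Maps

section Final
variable (f1 f2 f : R) (J I : Ideal R)

lemma hfw_zero
    (hcol : Submodule.colon (Ideal.span {f1}) (Ideal.span {f2}) ≤
      Submodule.colon (Ideal.span {f1}) (Ideal.span {f})) :
    ∀ w v : R, w ∈ I ^ 0 → v ∈ I ^ 0 → f2 * w + f1 * v = 0 →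
      f * w ∈ Ideal.span {f1} * I ^ 0 := by
  intro w v _ _ h
  rw [pow_zero, mul_one]
  have hw : w ∈ Submodule.colon (Ideal.span {f1}) (Ideal.span {f2}) :=
    Ideal.mem_colon_span_singleton.mpr (Ideal.mem_span_singleton'.mpr ⟨-v, by linear_combination -h⟩)
  have := Ideal.mem_colon_span_singleton.mp (hcol hw)
  rwa [mul_comm] at this

lemma hfw_succ (m : ℕ) (hI : I = Ideal.span {f1, f2, f})
    (hprev : Submodule.colon (Ideal.span {f1} * I ^ (m + 1)) (Ideal.span {f2}) ⊓ I ^ (m + 1) ≤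
      Ideal.span {f1} * I ^ m) :
    ∀ w v : R, w ∈ I ^ (m + 1) → v ∈ I ^ (m + 1) → f2 * w + f1 * v = 0 →
      f * w ∈ Ideal.span {f1} * I ^ (m + 1) := by
  intro w v hw hv h
  have hwf2 : w * f2 = f1 * -v := by linear_combination h
  have hwc : w ∈ Submodule.colon (Ideal.span {f1} * I ^ (m + 1)) (Ideal.span {f2}) ⊓
      I ^ (m + 1) := by
    refine ⟨Ideal.mem_colon_span_singleton.mpr ?_, hw⟩
    rw [hwf2]
    exact Ideal.mul_mem_mul (Ideal.mem_span_singleton_self f1) (neg_mem hv)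
  obtain ⟨s, hs, hws⟩ := Ideal.mem_span_singleton_mul.1 (hprev hwc)
  refine Ideal.mem_span_singleton_mul.2 ⟨f * s, ?_, by rw [← hws]; ring⟩
  rw [pow_succ']
  exact Ideal.mul_mem_mul (memIf f1 f2 f I hI) hs

end Final

theorem stmt9 {R : Type*} [CommRing R] [IsNoetherianRing R] [IsLocalRing R]
    (f1 f2 f : R) (h1 : f1 ∈ IsLocalRing.maximalIdeal R)
    (h2 : f2 ∈ IsLocalRing.maximalIdeal R) (hfm : f ∈ IsLocalRing.maximalIdeal R)
    (J I : Ideal R) (hJ : J = Ideal.span {f1, f2}) (hI : I = Ideal.span {f1, f2, f})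
    (L : ℕ) (hL : 2 ≤ L)
    (hann : ∀ d : ℕ, 1 ≤ d → d ≤ L →
      Submodule.colon (⊥ : Ideal R) (Ideal.span {f1}) ⊓ I ^ (d - 1) = ⊥)
    (hcol : Submodule.colon (Ideal.span {f1}) (Ideal.span {f2}) ≤
      Submodule.colon (Ideal.span {f1}) (Ideal.span {f})) :
    (∀ d : ℕ, 2 ≤ d → d ≤ L →
        Submodule.colon (Ideal.span {f1} * I ^ (d - 1)) (Ideal.span {f2}) ⊓ I ^ (d - 1) ≤
          Ideal.span {f1} * I ^ (d - 2)) ↔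
    (∀ d : ℕ, 2 ≤ d → d ≤ L →
        Nonempty (kosH1 I ![f1, f2, f] d ≃ₗ[R]
          idealQuot (Submodule.colon (J * I ^ (d - 1)) (Ideal.span {f ^ d}))
            (Submodule.colon (J * I ^ (d - 2)) (Ideal.span {f ^ (d - 1)})))) := by
  constructor
  · intro ha d hd2 hdL
    obtain ⟨k, rfl⟩ : ∃ k, d = k + 2 := ⟨d - 2, by omega⟩
    exact main_forward f1 f2 f J I k hJ hI (hann (k + 2) (by omega) hdL)
      (ha (k + 2) (by omega) hdL)
  · intro hb
    have key : ∀ k : ℕ, k + 2 ≤ L →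
        Submodule.colon (Ideal.span {f1} * I ^ (k + 1)) (Ideal.span {f2}) ⊓ I ^ (k + 1) ≤
          Ideal.span {f1} * I ^ k := by
      intro k
      induction k with
      | zero =>
        intro hk
        exact main_backward f1 f2 f J I 0 hJ hI (hb 2 (by omega) hk)
          (hfw_zero f1 f2 f I hcol)
      | succ m ih =>
        intro hk
        exact main_backward f1 f2 f J I (m + 1) hJ hI (hb (m + 3) (by omega) hk)
          (hfw_succ f1 f2 f I m hI (ih (by omega)))
    intro d hd2 hdL
    obtain ⟨k, rfl⟩ : ∃ k, d = k + 2 := ⟨d - 2, by omega⟩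
    exact key k hdL
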